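/- Define β(x,t) = (1/L(t))·arccos(cosh(x·L(t))/cosh(L(t))) for x ∈ [0,1] and t ∈ (0,1), where L(t) = (1/2)·arcosh((1+8t²+21t⁴-2t⁶)/(2t²(1+t²)²)). Then for fixed t ∈ (0,1), the mixed partial ∂²β/∂x∂t is negative for all x ∈ (0,1). -/

import Mathlib

noncomputable def arcosh (x : ℝ) : ℝ := Real.log (x + Real.sqrt (x^2 - 1))

noncomputable def L (t : ℝ) : ℝ :=
  (1/2) * arcosh ((1 + 8*t^2 + 21*t^4 - 2*t^6) / (2*t^2*(1+t^2)^2))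

noncomputable def β (x t : ℝ) : ℝ :=
  (1 / L t) * Real.arccos (Real.cosh (x * L t) / Real.cosh (L t))

noncomputable def wAux (t : ℝ) : ℝ := (1 + 8*t^2 + 21*t^4 - 2*t^6) / (2*t^2*(1+t^2)^2)

noncomputable def G (x l : ℝ) : ℝ :=
  -Real.sinh (x*l) / Real.sqrt (Real.cosh l ^ 2 - Real.cosh (x*l) ^ 2)

theorem wAux_gt_one {t : ℝ} (ht : t ∈ Set.Ioo (0:ℝ) 1) : 1 < wAux t := by
  obtain ⟨h1, h2⟩ := ht
  have hden : 0 < 2*t^2*(1+t^2)^2 := by positivity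
  rw [wAux, lt_div_iff₀ hden]
  nlinarith [pow_le_pow_of_le_one h1.le h2.le (by norm_num : (4:ℕ) ≤ 6), pow_pos h1 4, pow_pos h1 2]

theorem wAux_hasDeriv {t : ℝ} (ht : t ∈ Set.Ioo (0:ℝ) 1) :
    ∃ w', HasDerivAt wAux w' t ∧ w' < 0 := by
  obtain ⟨h1, h2⟩ := ht
  have hden : (0:ℝ) < 2*t^2*(1+t^2)^2 := by positivity
  have hp : HasDerivAt (fun t : ℝ => 1 + 8*t^2 + 21*t^4 - 2*t^6)
      (16*t + 84*t^3 - 12*t^5) t := by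
    have h2' := hasDerivAt_pow 2 t
    have h4' := hasDerivAt_pow 4 t
    have h6' := hasDerivAt_pow 6 t
    have := (((h2'.const_mul (8:ℝ)).const_add 1).add (h4'.const_mul 21)).sub (h6'.const_mul 2)
    refine this.congr_deriv ?_
    push_cast; ring
  have hq : HasDerivAt (fun t : ℝ => 2*t^2*(1+t^2)^2)
      (4*t*(1+t^2)^2 + 8*t^3*(1+t^2)) t := by
    have h2' := hasDerivAt_pow 2 t
    have hin : HasDerivAt (fun t : ℝ => (1+t^2)^2) (2*(1+t^2)^1*(2*t^1)) t :=
      (h2'.const_add 1).pow 2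
    have := (h2'.const_mul (2:ℝ)).mul hin
    refine this.congr_deriv ?_
    push_cast; ring
  have hu := hp.div hq hden.ne'
  refine ⟨_, hu, ?_⟩
  apply div_neg_of_neg_of_pos
  · nlinarith [pow_pos h1 3, pow_pos h1 5, pow_pos h1 7, pow_pos h1 9, pow_pos h1 2,
      pow_le_pow_of_le_one h1.le h2.le (by norm_num : (3:ℕ) ≤ 5)]
  · positivity

theorem L_hasDeriv {t : ℝ} (ht : t ∈ Set.Ioo (0:ℝ) 1) :
    ∃ l', HasDerivAt L l' t ∧ l' < 0 := by
  obtain ⟨w', hw, hw'⟩ := wAux_hasDeriv ht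
  have hw1 : 1 < wAux t := wAux_gt_one ht
  have hsq_pos : 0 < (wAux t)^2 - 1 := by nlinarith
  have hsqrt_pos : 0 < Real.sqrt ((wAux t)^2 - 1) := Real.sqrt_pos.2 hsq_pos
  have h1 : HasDerivAt (fun t => (wAux t)^2 - 1) (2*(wAux t)^1*w') t := (hw.pow 2).sub_const 1
  have h2 : HasDerivAt (fun t => Real.sqrt ((wAux t)^2 - 1))
      ((2*(wAux t)^1*w') / (2 * Real.sqrt ((wAux t)^2 - 1))) t := h1.sqrt hsq_pos.ne'
  have h3 := hw.add h2
  have hargpos : 0 < wAux t + Real.sqrt ((wAux t)^2 - 1) := by linarith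
  have h4 := h3.log hargpos.ne'
  have h5 := h4.const_mul (1/2 : ℝ)
  refine ⟨1/2 * ((w' + 2*(wAux t)^1*w' / (2 * Real.sqrt ((wAux t)^2 - 1))) /
      (wAux t + Real.sqrt ((wAux t)^2 - 1))), ?_, ?_⟩
  · show HasDerivAt L _ t
    have : L = fun t => (1/2 : ℝ) * Real.log (wAux t + Real.sqrt ((wAux t)^2 - 1)) := by
      funext s; rfl
    rw [this]
    exact h5
  · have hnum : w' + 2*(wAux t)^1*w' / (2 * Real.sqrt ((wAux t)^2 - 1)) < 0 := by
      have : 2*(wAux t)^1*w' / (2 * Real.sqrt ((wAux t)^2 - 1)) < 0 := by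
        apply div_neg_of_neg_of_pos
        · nlinarith
        · linarith
      linarith
    have := div_neg_of_neg_of_pos hnum hargpos
    nlinarith

theorem L_pos {t : ℝ} (ht : t ∈ Set.Ioo (0:ℝ) 1) : 0 < L t := by
  have hw1 : 1 < wAux t := wAux_gt_one ht
  have h : L t = (1/2 : ℝ) * Real.log (wAux t + Real.sqrt ((wAux t)^2 - 1)) := rfl
  rw [h]
  have h1 : (1:ℝ) < wAux t + Real.sqrt ((wAux t)^2 - 1) := by
    have := Real.sqrt_nonneg ((wAux t)^2 - 1); linarith
  have := Real.log_pos h1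
  linarith

theorem cosh_sq_lt {x l : ℝ} (hx : x ∈ Set.Ioo (0:ℝ) 1) (hl : 0 < l) :
    Real.cosh (x*l) ^ 2 < Real.cosh l ^ 2 := by
  obtain ⟨hx0, hx1⟩ := hx
  have h : Real.cosh (x*l) < Real.cosh l := by
    rw [Real.cosh_lt_cosh]
    rw [abs_of_pos (by positivity), abs_of_pos hl]
    nlinarith
  have h0 : 0 < Real.cosh (x*l) := Real.cosh_pos _
  nlinarith

theorem key_ineq {x l : ℝ} (hx : x ∈ Set.Ioo (0:ℝ) 1) (hl : 0 < l) :
    x * Real.cosh (x*l) * Real.sinh l < Real.sinh (x*l) * Real.cosh l := by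
  obtain ⟨hx0, hx1⟩ := hx
  have ha : 0 < x * l := by positivity
  have hal : x * l < l := by nlinarith
  have fmono : StrictMonoOn (fun u : ℝ => u * Real.cosh u / Real.sinh u) (Set.Ioi 0) := by
    apply strictMonoOn_of_deriv_pos (convex_Ioi 0)
    · apply ContinuousOn.div
      · exact (continuous_id.mul Real.continuous_cosh).continuousOn
      · exact Real.continuous_sinh.continuousOn
      · intro u hu
        exact Real.sinh_ne_zero.2 (ne_of_gt hu)
    · intro u hu
      rw [interior_Ioi] at hu
      have hS : 0 < Real.sinh u := Real.sinh_pos_iff.2 hu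
      have hd : HasDerivAt (fun u : ℝ => u * Real.cosh u / Real.sinh u)
          (((1 * Real.cosh u + u * Real.sinh u) * Real.sinh u - u * Real.cosh u * Real.cosh u)
            / Real.sinh u ^ 2) u :=
        ((hasDerivAt_id u).mul (Real.hasDerivAt_cosh u)).div (Real.hasDerivAt_sinh u) hS.ne'
      rw [hd.deriv]
      have hid : Real.cosh u ^ 2 - Real.sinh u ^ 2 = 1 := Real.cosh_sq_sub_sinh_sq u
      have hlt : u < Real.sinh u := Real.self_lt_sinh_iff.2 hu
      have hC : 1 ≤ Real.cosh u := Real.one_le_cosh u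
      apply div_pos _ (pow_pos hS 2)
      nlinarith [mul_le_mul_of_nonneg_right hC hS.le]
  have hmono := fmono ha (Set.mem_Ioi.2 hl) hal
  simp only at hmono
  have hSa : 0 < Real.sinh (x*l) := Real.sinh_pos_iff.2 ha
  have hSl : 0 < Real.sinh l := Real.sinh_pos_iff.2 hl
  rw [div_lt_div_iff₀ hSa hSl] at hmono
  have h2 : l * (x * Real.cosh (x*l) * Real.sinh l) < l * (Real.sinh (x*l) * Real.cosh l) := by
    nlinarith [hmono]
  exact lt_of_mul_lt_mul_left h2 hl.le

theorem G_hasDeriv {x l : ℝ} (hx : x ∈ Set.Ioo (0:ℝ) 1) (hl : 0 < l) :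
    ∃ g', HasDerivAt (fun l => G x l) g' l ∧ 0 < g' := by
  obtain ⟨hx0, hx1⟩ := hx
  have hq_pos : 0 < Real.cosh l ^ 2 - Real.cosh (x*l) ^ 2 := by
    have := cosh_sq_lt ⟨hx0, hx1⟩ hl; linarith
  have hB_pos : 0 < Real.sqrt (Real.cosh l ^ 2 - Real.cosh (x*l) ^ 2) := Real.sqrt_pos.2 hq_pos
  have hxl : HasDerivAt (fun l : ℝ => x * l) x l := by
    simpa using (hasDerivAt_id l).const_mul x
  have hnum : HasDerivAt (fun l : ℝ => -Real.sinh (x*l)) (-(Real.cosh (x*l) * x)) l :=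
    (hxl.sinh).neg
  have hq : HasDerivAt (fun l : ℝ => Real.cosh l ^ 2 - Real.cosh (x*l) ^ 2)
      (2 * Real.cosh l ^ 1 * Real.sinh l - 2 * Real.cosh (x*l) ^ 1 * (Real.sinh (x*l) * x)) l :=
    ((Real.hasDerivAt_cosh l).pow 2).sub ((hxl.cosh).pow 2)
  have hBd := hq.sqrt hq_pos.ne'
  have hG := hnum.div hBd hB_pos.ne'
  have hpos : 0 < (-(Real.cosh (x*l) * x) * Real.sqrt (Real.cosh l ^ 2 - Real.cosh (x*l) ^ 2) -
      -Real.sinh (x*l) *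
        ((2 * Real.cosh l ^ 1 * Real.sinh l - 2 * Real.cosh (x*l) ^ 1 * (Real.sinh (x*l) * x)) /
          (2 * Real.sqrt (Real.cosh l ^ 2 - Real.cosh (x*l) ^ 2)))) /
      Real.sqrt (Real.cosh l ^ 2 - Real.cosh (x*l) ^ 2) ^ 2 := by
    set c := Real.cosh (x*l) with hc
    set s := Real.sinh (x*l) with hs
    set C := Real.cosh l with hCdef
    set S := Real.sinh l with hSdef
    set B := Real.sqrt (C ^ 2 - c ^ 2) with hBdef
    have hB2 : B^2 = C^2 - c^2 := Real.sq_sqrt hq_pos.le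
    have hBp : 0 < B := hB_pos
    have hkey : x * c * S < s * C := key_ineq ⟨hx0, hx1⟩ hl
    have hS_pos : 0 < S := Real.sinh_pos_iff.2 hl
    have hidC : C^2 - S^2 = 1 := Real.cosh_sq_sub_sinh_sq l
    have hidc : c^2 - s^2 = 1 := Real.cosh_sq_sub_sinh_sq (x*l)
    have hc_pos : 0 < c := Real.cosh_pos _
    apply div_pos _ (pow_pos hBp 2)
    rw [sub_pos, ← mul_div_assoc, div_lt_iff₀ (by positivity : (0:ℝ) < 2*B)]
    have e0 : -(c*x)*B*(2*B) = -(c*x)*(2*(C^2-c^2)) := by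
      rw [show -(c*x)*B*(2*B) = -(c*x)*2*B^2 by ring, hB2]; ring
    have e1 : c*x*C^2 - c*x*S^2 = c*x := by
      rw [show c*x*C^2 - c*x*S^2 = c*x*(C^2-S^2) by ring, hidC]; ring
    have e2 : c*x*c^2 - c*x*s^2 = c*x := by
      rw [show c*x*c^2 - c*x*s^2 = c*x*(c^2-s^2) by ring, hidc]; ring
    have h3 : 0 < S*(s*C - x*c*S) := mul_pos hS_pos (by linarith)
    nlinarith [e0, e1, e2, h3]
  exact ⟨_, hG, hpos⟩

theorem inner_deriv {x s : ℝ} (hx : x ∈ Set.Ioo (0:ℝ) 1) (hLs : 0 < L s) :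
    deriv (fun y => β y s) x = G x (L s) := by
  obtain ⟨hx0, hx1⟩ := hx
  set l := L s with hl
  have hc_lt : Real.cosh (x*l) < Real.cosh l := by
    rw [Real.cosh_lt_cosh, abs_of_pos (by positivity), abs_of_pos hLs]
    nlinarith
  have hC_pos : 0 < Real.cosh l := Real.cosh_pos _
  have hc_pos : 0 < Real.cosh (x*l) := Real.cosh_pos _
  have hr_pos : 0 < Real.cosh (x*l) / Real.cosh l := by positivity
  have hr_lt : Real.cosh (x*l) / Real.cosh l < 1 := (div_lt_one hC_pos).2 hc_lt
  have h1 : Real.cosh (x*l) / Real.cosh l ≠ -1 := by linarith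
  have h2 : Real.cosh (x*l) / Real.cosh l ≠ 1 := ne_of_lt hr_lt
  have hinner : HasDerivAt (fun y : ℝ => Real.cosh (y*l) / Real.cosh l)
      (Real.sinh (x*l) * l / Real.cosh l) x := by
    simpa using (((hasDerivAt_id x).mul_const l).cosh).div_const (Real.cosh l)
  have harccos := (Real.hasDerivAt_arccos h1 h2).comp x hinner
  have hβ := harccos.const_mul (1 / l)
  have hval : (1/l) * (-(1 / Real.sqrt (1 - (Real.cosh (x*l) / Real.cosh l)^2)) *
      (Real.sinh (x*l) * l / Real.cosh l)) = G x l := by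
    have hq_pos : 0 < Real.cosh l ^ 2 - Real.cosh (x*l) ^ 2 := by
      have := cosh_sq_lt ⟨hx0, hx1⟩ hLs; linarith
    have hre : 1 - (Real.cosh (x*l) / Real.cosh l)^2 =
        (Real.cosh l ^ 2 - Real.cosh (x*l) ^ 2) / Real.cosh l ^ 2 := by
      field_simp
    rw [hre, Real.sqrt_div hq_pos.le, Real.sqrt_sq hC_pos.le]
    have hBp : 0 < Real.sqrt (Real.cosh l ^ 2 - Real.cosh (x*l) ^ 2) := Real.sqrt_pos.2 hq_pos
    rw [G]
    field_simp
  have hfin : HasDerivAt (fun y => β y s) (G x l) x := by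
    have h3 : (fun y => β y s) = fun y =>
        (1/l) * Real.arccos (Real.cosh (y*l) / Real.cosh l) := by
      funext y; rw [β]
    rw [h3]
    refine hβ.congr_deriv ?_
    rw [← hval]
  rw [hfin.deriv]

theorem stmt_12 : ∀ x ∈ Set.Ioo (0:ℝ) 1, ∀ t ∈ Set.Ioo (0:ℝ) 1,
    deriv (fun s => deriv (fun y => β y s) x) t < 0 := by
  intro x hx t ht
  have hEq : (fun s => deriv (fun y => β y s) x) =ᶠ[nhds t] (fun s => G x (L s)) := by
    filter_upwards [isOpen_Ioo.mem_nhds ht] with s hs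
    exact inner_deriv hx (L_pos hs)
  rw [hEq.deriv_eq]
  obtain ⟨l', hL, hl'⟩ := L_hasDeriv ht
  obtain ⟨g', hGd, hg'⟩ := G_hasDeriv hx (L_pos ht)
  have hcomp : HasDerivAt (fun s => G x (L s)) (g' * l') t := hGd.comp t hL
  rw [hcomp.deriv]
  exact mul_neg_of_pos_of_neg hg' hl'
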